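/- Approximate functional calculus bounds: let $H \in \mathbb{C}^{n\times n}$ be diagonalizable as $H = VDV^{-1}$ with $\|V\| = \|V^{-1}\| = \sqrt{\kappa_V(H)}$, eigenvalues $\lambda_i = D_{ii}$, and let $Z_H$ be the random variable taking value $\lambda_i$ with probability $|e_n^* V e_i|^2 / \|e_n^* V\|^2$. Then for any function $f$ defined on $\mathrm{Spec}(H)$: $\|e_n^* f(H)\| / \kappa_V(H) \le \mathbb{E}[|f(Z_H)|^2]^{1/2} \le \kappa_V(H) \|e_n^* f(H)\|$, where $f(H) := V f(D) V^{-1}$ with $f(D)$ diagonal with entries $f(\lambda_i)$. -/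

import Mathlib

open Matrix

/-- The spectral (ℓ² operator) norm of a complex matrix. -/
noncomputable def specNorm {m : Type*} [Fintype m] [DecidableEq m] (A : Matrix m m ℂ) : ℝ :=
  ‖Matrix.toEuclideanCLM (𝕜 := ℂ) A‖

/-- The Euclidean norm of the last row of a matrix, i.e. `‖eₙ* A‖`. -/
noncomputable def rowNorm {n : ℕ} (A : Matrix (Fin (n + 1)) (Fin (n + 1)) ℂ) : ℝ :=
  Real.sqrt (∑ j, ‖A (Fin.last n) j‖ ^ 2)

/-- The probability that the spectral random variable `Z_H` equals the `i`-th eigenvalue: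
`|eₙ* V eᵢ|² / ‖eₙ* V‖²`. -/
noncomputable def specWeight {n : ℕ} (V : Matrix (Fin (n + 1)) (Fin (n + 1)) ℂ)
    (i : Fin (n + 1)) : ℝ :=
  ‖V (Fin.last n) i‖ ^ 2 / ∑ j, ‖V (Fin.last n) j‖ ^ 2

lemma rowNorm_eq {n : ℕ} (A : Matrix (Fin (n + 1)) (Fin (n + 1)) ℂ) :
    rowNorm A = ‖Matrix.toEuclideanCLM (𝕜 := ℂ) Aᴴ
      ((WithLp.equiv 2 _).symm (Pi.single (Fin.last n) 1))‖ := by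
  rw [show (WithLp.equiv 2 _).symm (Pi.single (Fin.last n) 1) = WithLp.toLp 2 (Pi.single (Fin.last n) (1:ℂ)) from rfl, Matrix.toEuclideanCLM_toLp, EuclideanSpace.norm_eq]
  unfold rowNorm
  congr 1
  apply Finset.sum_congr rfl
  intro j _
  simp [Matrix.mulVec_single, Matrix.conjTranspose_apply, Complex.norm_conj]

lemma rowNorm_nonneg {n : ℕ} (A : Matrix (Fin (n + 1)) (Fin (n + 1)) ℂ) : 0 ≤ rowNorm A :=
  Real.sqrt_nonneg _

lemma rowNorm_one {n : ℕ} : rowNorm (1 : Matrix (Fin (n + 1)) (Fin (n + 1)) ℂ) = 1 := by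
  unfold rowNorm
  rw [show (∑ j, ‖(1 : Matrix (Fin (n+1)) (Fin (n+1)) ℂ) (Fin.last n) j‖ ^ 2) = 1 by
    simp [Matrix.one_apply, apply_ite (fun z : ℂ => ‖z‖), Finset.sum_ite_eq']]
  exact Real.sqrt_one

open scoped Matrix.Norms.L2Operator in
lemma specNorm_eq_l2norm {m : Type*} [Fintype m] [DecidableEq m] (A : Matrix m m ℂ) :
    specNorm A = ‖A‖ := (Matrix.cstar_norm_def A).symm

open scoped Matrix.Norms.L2Operator in
lemma specNorm_conjTranspose {m : Type*} [Fintype m] [DecidableEq m] (A : Matrix m m ℂ) :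
    specNorm Aᴴ = specNorm A := by
  rw [specNorm_eq_l2norm, specNorm_eq_l2norm]
  exact Matrix.l2_opNorm_conjTranspose A

lemma rowNorm_mul_le {n : ℕ} (A B : Matrix (Fin (n + 1)) (Fin (n + 1)) ℂ) :
    rowNorm (A * B) ≤ rowNorm A * specNorm B := by
  rw [rowNorm_eq, rowNorm_eq, Matrix.conjTranspose_mul, _root_.map_mul]
  calc ‖(Matrix.toEuclideanCLM (𝕜 := ℂ) Bᴴ * Matrix.toEuclideanCLM (𝕜 := ℂ) Aᴴ)
        ((WithLp.equiv 2 _).symm (Pi.single (Fin.last n) 1))‖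
      ≤ ‖Matrix.toEuclideanCLM (𝕜 := ℂ) Bᴴ‖ *
        ‖Matrix.toEuclideanCLM (𝕜 := ℂ) Aᴴ ((WithLp.equiv 2 _).symm (Pi.single (Fin.last n) 1))‖ :=
        (Matrix.toEuclideanCLM (𝕜 := ℂ) Bᴴ).le_opNorm _
    _ = _ := by rw [mul_comm]; congr 1; exact specNorm_conjTranspose B

/-- Approximate functional calculus: if `H = V D V⁻¹` with
`‖V‖ = ‖V⁻¹‖ = √κ_V(H)`, eigenvalues `λᵢ = Dᵢᵢ`, and `Z_H` takes value `λᵢ` with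
probability `|eₙ* V eᵢ|²/‖eₙ* V‖²`, then for any `f`,
`‖eₙ* f(H)‖/κ_V(H) ≤ E[|f(Z_H)|²]^{1/2} ≤ κ_V(H) ‖eₙ* f(H)‖`, where
`f(H) = V f(D) V⁻¹`. -/
theorem stmt4 {n : ℕ} (H V : Matrix (Fin (n + 1)) (Fin (n + 1)) ℂ)
    (d : Fin (n + 1) → ℂ) (hV : IsUnit V)
    (hdiag : H = V * Matrix.diagonal d * V⁻¹)
    (κ : ℝ) (hκ1 : specNorm V = Real.sqrt κ) (hκ2 : specNorm V⁻¹ = Real.sqrt κ)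
    (f : ℂ → ℂ) :
    rowNorm (V * Matrix.diagonal (fun i => f (d i)) * V⁻¹) / κ ≤
        Real.sqrt (∑ i, specWeight V i * ‖f (d i)‖ ^ 2) ∧
      Real.sqrt (∑ i, specWeight V i * ‖f (d i)‖ ^ 2) ≤
        κ * rowNorm (V * Matrix.diagonal (fun i => f (d i)) * V⁻¹) := by
  have hdet : IsUnit V.det := (Matrix.isUnit_iff_isUnit_det V).mp hV
  have hVinv : V * V⁻¹ = 1 := Matrix.mul_nonsing_inv V hdet
  have hinvV : V⁻¹ * V = 1 := Matrix.nonsing_inv_mul V hdet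
  set s := Real.sqrt κ with hs
  -- s > 0
  have hVne : V ≠ 0 := by
    intro h
    rw [h] at hVinv
    have h2 := congrFun (congrFun hVinv (Fin.last n)) (Fin.last n)
    simp [Matrix.one_apply] at h2
  have hs0 : 0 < s := by
    rw [← hκ1]
    have h0 : specNorm V ≠ 0 := by
      intro h
      apply hVne
      have : Matrix.toEuclideanCLM (𝕜 := ℂ) V = 0 := norm_eq_zero.mp h
      have := congrArg (Matrix.toEuclideanCLM (𝕜 := ℂ)).symm this
      simpa using this
    exact lt_of_le_of_ne (norm_nonneg _) (Ne.symm h0)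
  have hκpos : 0 < κ := Real.sqrt_pos.mp hs0
  have hss : s * s = κ := Real.mul_self_sqrt hκpos.le
  set r := rowNorm V with hrdef
  have hr1 : (1 : ℝ) ≤ r * s := by
    have := rowNorm_mul_le V V⁻¹
    rw [hVinv, rowNorm_one, hκ2] at this
    exact this
  have hr_pos : 0 < r := by nlinarith [rowNorm_nonneg V]
  have hr_le : r ≤ s := by
    have := rowNorm_mul_le 1 V
    rw [one_mul, rowNorm_one, one_mul, hκ1] at this
    exact this
  set M := rowNorm (V * Matrix.diagonal (fun i => f (d i)) * V⁻¹) with hMdef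
  set N := rowNorm (V * Matrix.diagonal (fun i => f (d i))) with hNdef
  have hM0 : 0 ≤ M := rowNorm_nonneg _
  have hN0 : 0 ≤ N := rowNorm_nonneg _
  have hMN : M ≤ N * s := by
    have := rowNorm_mul_le (V * Matrix.diagonal (fun i => f (d i))) V⁻¹
    rwa [hκ2] at this
  have hNM : N ≤ M * s := by
    have h := rowNorm_mul_le (V * Matrix.diagonal (fun i => f (d i)) * V⁻¹) V
    rw [hκ1] at h
    rwa [mul_assoc, hinvV, mul_one] at h
  -- the expectation equals N / r
  have hE : Real.sqrt (∑ i, specWeight V i * ‖f (d i)‖ ^ 2) = N / r := by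
    have hSnn : 0 ≤ ∑ j, ‖V (Fin.last n) j‖ ^ 2 :=
      Finset.sum_nonneg fun j _ => sq_nonneg _
    have hsum : (∑ i, specWeight V i * ‖f (d i)‖ ^ 2) =
        (∑ i, ‖(V * Matrix.diagonal (fun i => f (d i))) (Fin.last n) i‖ ^ 2) /
          ∑ j, ‖V (Fin.last n) j‖ ^ 2 := by
      rw [Finset.sum_div]
      apply Finset.sum_congr rfl
      intro i _
      rw [Matrix.mul_diagonal]
      unfold specWeight
      rw [norm_mul, mul_pow]
      ring
    rw [hsum, Real.sqrt_div (Finset.sum_nonneg fun i _ => sq_nonneg _)]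
    rfl
  rw [hE]
  constructor
  · rw [div_le_div_iff₀ hκpos hr_pos]
    nlinarith
  · rw [div_le_iff₀ hr_pos]
    nlinarith [mul_le_mul_of_nonneg_left hr1 (mul_nonneg hM0 hs0.le)]
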